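/- Let k be an algebraically closed field, A a finitely generated commutative k-algebra, N a finitely generated A-module, and r a natural number. If N is finite locally free of rank r, then dim_k (N ⊗_A A/𝔪) = r for every maximal ideal 𝔪 ⊆ A. If moreover A is reduced, then the converse holds: N is finite locally free of rank r if and only if dim_k (N ⊗_A A/𝔪) = r for every maximal ideal 𝔪 ⊆ A. -/

import Mathlib

/-!
A finitely generated module over a commutative ring is *finite locally free of
rank `r`* if it is finitely generated projective of constant rank `r`, i.e. its
localization at every prime is free of rank `r`.  Note that for `A` a finitely
generated algebra over an algebraically closed field `k`, the residue field
`A ⧸ 𝔪` at every maximal ideal `𝔪` is `k`, so `dim_k (N ⊗_A A/𝔪)` is the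
`k`-dimension of `(A ⧸ 𝔪) ⊗[A] N`.
-/

open TensorProduct

noncomputable section

/-- `N` is finite locally free of rank `r` over `A`: finitely generated,
projective, and of constant rank `r` at every prime. -/
def FiniteLocallyFreeOfRank (A : Type*) [CommRing A]
    (N : Type*) [AddCommGroup N] [Module A N] (r : ℕ) : Prop :=
  Module.Finite A N ∧ Module.Projective A N ∧
    ∀ (P : Ideal A) (_ : P.IsPrime),
      Module.finrank (Localization.AtPrime P) (LocalizedModule P.primeCompl N) = r

lemma statement3.aux_bij {k : Type*} [Field k] [IsAlgClosed k]
    {A : Type*} [CommRing A] [Algebra k A] [Algebra.FiniteType k A]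
    (𝔪 : Ideal A) [𝔪.IsMaximal] :
    Function.Bijective (algebraMap k (A ⧸ 𝔪)) := by
  haveI : Algebra.FiniteType k (A ⧸ 𝔪) :=
    Algebra.FiniteType.of_surjective (Ideal.Quotient.mkₐ k 𝔪)
      (Ideal.Quotient.mkₐ_surjective k 𝔪)
  haveI : Module.Finite k (A ⧸ 𝔪) := by
    letI := Ideal.Quotient.field 𝔪
    exact finite_of_finite_type_of_isJacobsonRing k (A ⧸ 𝔪)
  haveI : Algebra.IsIntegral k (A ⧸ 𝔪) := Algebra.IsIntegral.of_finite k _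
  exact ⟨(algebraMap k (A ⧸ 𝔪)).injective,
    IsAlgClosed.algebraMap_bijective_of_isIntegral.2⟩

lemma statement3.aux_dimshift {k : Type*} [Field k] [IsAlgClosed k]
    {A : Type*} [CommRing A] [Algebra k A] [Algebra.FiniteType k A]
    (𝔪 : Ideal A) [𝔪.IsMaximal] (V : Type*) [AddCommGroup V]
    [Module k V] [Module (A ⧸ 𝔪) V] [IsScalarTower k (A ⧸ 𝔪) V] :
    Module.finrank k V = Module.finrank (A ⧸ 𝔪) V := by
  letI := Ideal.Quotient.field 𝔪
  have h1 : Module.finrank k (A ⧸ 𝔪) = 1 := by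
    rw [(LinearEquiv.ofBijective (Algebra.linearMap k (A ⧸ 𝔪))
      (statement3.aux_bij 𝔪)).symm.finrank_eq, Module.finrank_self]
  rw [← Module.finrank_mul_finrank k (A ⧸ 𝔪) V, h1, one_mul]


lemma statement3.fiber_finrank {A : Type*} [CommRing A] {N : Type*} [AddCommGroup N] [Module A N]
    [Module.Finite A N] (𝔪 : Ideal A) [𝔪.IsMaximal]
    [Module.Free (Localization.AtPrime 𝔪) (LocalizedModule 𝔪.primeCompl N)] :
    Module.finrank (A ⧸ 𝔪) ((A ⧸ 𝔪) ⊗[A] N)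
      = Module.finrank (Localization.AtPrime 𝔪) (LocalizedModule 𝔪.primeCompl N) := by
  letI := Ideal.Quotient.field 𝔪
  set Aₘ := Localization.AtPrime 𝔪
  set Nₘ := LocalizedModule 𝔪.primeCompl N
  
  have hu : ∀ s : 𝔪.primeCompl, IsUnit (algebraMap A (A ⧸ 𝔪) s) := by
    rintro ⟨s, hs⟩
    refine IsUnit.mk0 _ ?_
    rw [Ideal.Quotient.algebraMap_eq, Ne, Ideal.Quotient.eq_zero_iff_mem]
    exact hs
  letI : Algebra Aₘ (A ⧸ 𝔪) := (IsLocalization.lift (S := Aₘ) hu).toAlgebra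
  haveI : IsScalarTower A Aₘ (A ⧸ 𝔪) :=
    IsScalarTower.of_algebraMap_eq' (IsLocalization.lift_comp hu).symm
  haveI : Module.Finite Aₘ Nₘ :=
    Module.Finite.of_isLocalizedModule 𝔪.primeCompl (LocalizedModule.mkLinearMap 𝔪.primeCompl N)
  let e1 : (A ⧸ 𝔪) ⊗[Aₘ] (Aₘ ⊗[A] N) ≃ₗ[(A ⧸ 𝔪)] (A ⧸ 𝔪) ⊗[A] N :=
    TensorProduct.AlgebraTensorModule.cancelBaseChange A Aₘ (A ⧸ 𝔪) (A ⧸ 𝔪) N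
  let e2 : Aₘ ⊗[A] N ≃ₗ[Aₘ] Nₘ :=
    ((isLocalizedModule_iff_isBaseChange 𝔪.primeCompl Aₘ
      (LocalizedModule.mkLinearMap 𝔪.primeCompl N)).mp inferInstance).equiv
  let e3 : (A ⧸ 𝔪) ⊗[Aₘ] (Aₘ ⊗[A] N) ≃ₗ[(A ⧸ 𝔪)] (A ⧸ 𝔪) ⊗[Aₘ] Nₘ :=
    TensorProduct.AlgebraTensorModule.congr (LinearEquiv.refl (A ⧸ 𝔪) (A ⧸ 𝔪)) e2
  rw [(e1.symm.trans e3).finrank_eq]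
  let b := Module.Free.chooseBasis Aₘ Nₘ
  rw [Module.finrank_eq_card_basis (b.baseChange (A ⧸ 𝔪)), Module.finrank_eq_card_chooseBasisIndex]


set_option maxHeartbeats 1000000 in
lemma statement3.pi_phi {A F' : Type*} [CommRing A] [CommRing F'] [Algebra A F']
    {N : Type*} [AddCommGroup N] [Module A N] {r : ℕ} (n : Fin r → N) (x : Fin r → A) :
    (1 : F') ⊗ₜ[A] (Fintype.linearCombination A n x)
      = Fintype.linearCombination F' (fun i => (1:F') ⊗ₜ[A] n i)
          (fun i => algebraMap A F' (x i)) := by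
  simp [Fintype.linearCombination_apply, tmul_sum, tmul_smul, algebraMap_smul]

set_option maxHeartbeats 1000000 in
lemma statement3.stepA {A : Type*} [CommRing A] [IsJacobsonRing A] [IsReduced A]
    {N : Type*} [AddCommGroup N] [Module A N] [Module.Finite A N] {r : ℕ}
    (h : ∀ (𝔪 : Ideal A) (_ : 𝔪.IsMaximal),
      Module.finrank (A ⧸ 𝔪) ((A ⧸ 𝔪) ⊗[A] N) = r)
    (𝔪 : Ideal A) (h𝔪 : 𝔪.IsMaximal) :
    Module.Free (Localization.AtPrime 𝔪) (LocalizedModule 𝔪.primeCompl N) ∧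
      Module.finrank (Localization.AtPrime 𝔪) (LocalizedModule 𝔪.primeCompl N) = r := by
  haveI := h𝔪
  letI := Ideal.Quotient.field 𝔪
  let π : N →ₗ[A] (A ⧸ 𝔪) ⊗[A] N := (TensorProduct.mk A (A ⧸ 𝔪) N) 1
  let e0 := TensorProduct.quotTensorEquivQuotSMul N 𝔪
  have he0 : ∀ m : N, e0 (π m) = Submodule.Quotient.mk m := by
    intro m
    have h1 : π m = (Ideal.Quotient.mk 𝔪 1 : A ⧸ 𝔪) ⊗ₜ[A] m := rfl
    rw [h1, TensorProduct.quotTensorEquivQuotSMul_mk_tmul, one_smul]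
  have hπsurj : Function.Surjective π := by
    intro v
    obtain ⟨m, hm⟩ := Submodule.Quotient.mk_surjective _ (e0 v)
    exact ⟨m, e0.injective (by rw [he0, hm])⟩
  have hπker : ∀ m : N, π m = 0 → m ∈ (𝔪 • ⊤ : Submodule A N) := by
    intro m hm
    have h2 := he0 m
    rw [hm, map_zero] at h2
    exact (Submodule.Quotient.mk_eq_zero _).mp h2.symm
  haveI : Module.Finite (A ⧸ 𝔪) ((A ⧸ 𝔪) ⊗[A] N) := inferInstance
  let b : Module.Basis (Fin r) (A ⧸ 𝔪) ((A ⧸ 𝔪) ⊗[A] N) :=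
    Module.finBasisOfFinrankEq (A ⧸ 𝔪) ((A ⧸ 𝔪) ⊗[A] N) (h 𝔪 h𝔪)
  choose n hn using fun i => hπsurj (b i)
  let φ : (Fin r → A) →ₗ[A] N := Fintype.linearCombination A n
  -- the range of φ together with 𝔪 • N is everything
  have hsup : (⊤ : Submodule A N) ≤ LinearMap.range φ ⊔ 𝔪 • ⊤ := by
    intro m _
    have hmk := Ideal.Quotient.mk_surjective (I := 𝔪)
    choose a ha using fun i => hmk (b.repr (π m) i)
    have hπu : π (φ a) = π m := by
      have h3 : π (φ a) = ∑ i, (Ideal.Quotient.mk 𝔪 (a i)) • b i := by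
        show (1 : A ⧸ 𝔪) ⊗ₜ[A] (φ a) = _
        rw [statement3.pi_phi]
        simp only [Fintype.linearCombination_apply, Ideal.Quotient.algebraMap_eq]
        exact Finset.sum_congr rfl fun i _ => by rw [← hn i]; rfl
      have h4 : ∑ i, (Ideal.Quotient.mk 𝔪 (a i)) • b i = π m := by
        simp_rw [ha]
        exact b.sum_repr (π m)
      rw [h3, h4]
    have hsub : m - φ a ∈ (𝔪 • ⊤ : Submodule A N) :=
      hπker _ (by rw [map_sub, hπu, sub_self])
    exact Submodule.mem_sup.mpr ⟨φ a, ⟨a, rfl⟩, m - φ a, hsub, by abel⟩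
  -- Nakayama: find s outside 𝔪 with s • N ⊆ range φ
  have hCtop : (⊤ : Submodule A (N ⧸ LinearMap.range φ)) ≤ 𝔪 • ⊤ := by
    have h5 : Submodule.map (LinearMap.range φ).mkQ (⊤ : Submodule A N) = ⊤ := by
      rw [Submodule.map_top, Submodule.range_mkQ]
    have h7 : Submodule.map (LinearMap.range φ).mkQ (LinearMap.range φ) = ⊥ := by
      rw [Submodule.eq_bot_iff]
      rintro x ⟨y, hy, rfl⟩
      simpa [Submodule.Quotient.mk_eq_zero] using hy
    calc (⊤ : Submodule A (N ⧸ LinearMap.range φ))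
        = Submodule.map (LinearMap.range φ).mkQ ⊤ := h5.symm
      _ ≤ Submodule.map (LinearMap.range φ).mkQ (LinearMap.range φ ⊔ 𝔪 • ⊤) :=
          Submodule.map_mono hsup
      _ = 𝔪 • ⊤ := by
          rw [Submodule.map_sup, Submodule.map_smul'', h7, bot_sup_eq, h5]
  obtain ⟨s, hs1, hs0⟩ :=
    Submodule.exists_sub_one_mem_and_smul_eq_zero_of_fg_of_le_smul 𝔪 ⊤
      (Module.finite_def.mp inferInstance) hCtop
  have hs𝔪 : s ∉ 𝔪 := by
    intro hs
    exact h𝔪.ne_top (Ideal.eq_top_of_isUnit_mem _ (by simpa using 𝔪.sub_mem hs hs1) isUnit_one)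
  have hsN : ∀ m : N, ∃ y, φ y = s • m := by
    intro m
    have h8 : (LinearMap.range φ).mkQ (s • m) = 0 := by
      rw [map_smul]
      exact hs0 _ Submodule.mem_top
    rw [Submodule.mkQ_apply, Submodule.Quotient.mk_eq_zero] at h8
    obtain ⟨y, hy⟩ := h8
    exact ⟨y, hy⟩
  -- kernel of φ is killed by s
  have hker : ∀ x : Fin r → A, φ x = 0 → ∀ i, s * x i = 0 := by
    intro x hx i
    have hbotrad : (⊥ : Ideal A).IsRadical := by
      have : (⊥ : Ideal A).radical = ⊥ := nilradical_eq_zero A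
      exact this.le
    have hjac : (⊥ : Ideal A).jacobson = ⊥ := IsJacobsonRing.out' (⊥ : Ideal A) hbotrad
    have hmem : s * x i ∈ (⊥ : Ideal A).jacobson := by
      rw [Ideal.jacobson, Ideal.mem_sInf]
      rintro J ⟨-, hJ⟩
      by_cases hsJ : s ∈ J
      · exact J.mul_mem_right _ hsJ
      haveI := hJ
      letI := Ideal.Quotient.field J
      let π' : N →ₗ[A] (A ⧸ J) ⊗[A] N := (TensorProduct.mk A (A ⧸ J) N) 1
      let ψ : (Fin r → A ⧸ J) →ₗ[A ⧸ J] (A ⧸ J) ⊗[A] N :=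
        Fintype.linearCombination (A ⧸ J) (fun i => π' (n i))
      have hcomm : ∀ y : Fin r → A,
          ψ (fun i => algebraMap A (A ⧸ J) (y i)) = π' (φ y) :=
        fun y => (statement3.pi_phi n y).symm
      have hsunit : IsUnit (algebraMap A (A ⧸ J) s) := by
        refine IsUnit.mk0 _ ?_
        rw [Ideal.Quotient.algebraMap_eq, Ne, Ideal.Quotient.eq_zero_iff_mem]
        exact hsJ
      have hψsurj : Function.Surjective ψ := by
        rw [← LinearMap.range_eq_top, eq_top_iff]
        rintro v -
        induction v with
        | zero => exact zero_mem _
        | add a b ha hb => exact add_mem ha hb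
        | tmul c m =>
          have h1 : (1 : A ⧸ J) ⊗ₜ[A] m ∈ LinearMap.range ψ := by
            obtain ⟨y, hy⟩ := hsN m
            have h2 : algebraMap A (A ⧸ J) s • ((1 : A ⧸ J) ⊗ₜ[A] m)
                = ψ (fun i => algebraMap A (A ⧸ J) (y i)) := by
              rw [hcomm, hy]
              show _ = (1 : A ⧸ J) ⊗ₜ[A] (s • m)
              rw [TensorProduct.tmul_smul, algebraMap_smul]
            obtain ⟨t, ht⟩ := hsunit.exists_left_inv
            have h3 : (1 : A ⧸ J) ⊗ₜ[A] m
                = t • ψ (fun i => algebraMap A (A ⧸ J) (y i)) := by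
              rw [← h2, smul_smul, ht, one_smul]
            rw [h3]
            exact Submodule.smul_mem _ _ ⟨_, rfl⟩
          have h4 : c ⊗ₜ[A] m = c • ((1 : A ⧸ J) ⊗ₜ[A] m) := by
            rw [smul_tmul', smul_eq_mul, mul_one]
          rw [h4]
          exact Submodule.smul_mem _ _ h1
      have hdim : Module.finrank (A ⧸ J) (Fin r → A ⧸ J)
          = Module.finrank (A ⧸ J) ((A ⧸ J) ⊗[A] N) := by
        rw [Module.finrank_fin_fun, h J hJ]
      have hψinj := (LinearMap.injective_iff_surjective_of_finrank_eq_finrank hdim).mpr hψsurj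
      have h5 : ψ (fun i => algebraMap A (A ⧸ J) (x i)) = 0 := by
        rw [hcomm, hx, map_zero]
      have h6 : (fun i => algebraMap A (A ⧸ J) (x i)) = (0 : Fin r → A ⧸ J) :=
        hψinj (by rw [h5, map_zero])
      have h7 : x i ∈ J := by
        rw [← Ideal.Quotient.eq_zero_iff_mem, ← Ideal.Quotient.algebraMap_eq]
        exact congrFun h6 i
      exact J.mul_mem_left _ h7
    rwa [hjac, Ideal.mem_bot] at hmem
  -- the localized map is an isomorphism
  let Aₘ := Localization.AtPrime 𝔪
  let μ : (Fin r → Aₘ) →ₗ[Aₘ] LocalizedModule 𝔪.primeCompl N :=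
    Fintype.linearCombination Aₘ (fun i => LocalizedModule.mk (n i) 1)
  have hμφ : ∀ y : Fin r → A,
      μ (fun i => algebraMap A Aₘ (y i)) = LocalizedModule.mk (φ y) 1 := by
    intro y
    show ∑ i, algebraMap A Aₘ (y i) • LocalizedModule.mk (n i) 1 = _
    have h10 : ∀ i, algebraMap A Aₘ (y i) • LocalizedModule.mk (n i) (1 : 𝔪.primeCompl)
        = LocalizedModule.mkLinearMap 𝔪.primeCompl N (y i • n i) := by
      intro i
      rw [algebraMap_smul]
      show _ = LocalizedModule.mk (y i • n i) 1
      rw [LocalizedModule.smul'_mk]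
    rw [Finset.sum_congr rfl fun i _ => h10 i, ← map_sum]
    rfl
  have hs' : (⟨s, hs𝔪⟩ : 𝔪.primeCompl) = ⟨s, hs𝔪⟩ := rfl
  have hμsurj : Function.Surjective μ := by
    rw [← LinearMap.range_eq_top, eq_top_iff]
    rintro w -
    induction w using LocalizedModule.induction_on with
    | h m t =>
      have h11 : LocalizedModule.mk m (1 : 𝔪.primeCompl) ∈ LinearMap.range μ := by
        obtain ⟨y, hy⟩ := hsN m
        have hsu : IsUnit (algebraMap A Aₘ s) :=
          IsLocalization.map_units Aₘ (⟨s, hs𝔪⟩ : 𝔪.primeCompl)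
        obtain ⟨t', ht'⟩ := hsu.exists_left_inv
        have h12 : algebraMap A Aₘ s • LocalizedModule.mk m (1 : 𝔪.primeCompl)
            = μ (fun i => algebraMap A Aₘ (y i)) := by
          rw [hμφ, hy, algebraMap_smul, LocalizedModule.smul'_mk]
        have h13 : LocalizedModule.mk m (1 : 𝔪.primeCompl)
            = t' • μ (fun i => algebraMap A Aₘ (y i)) := by
          rw [← h12, smul_smul, ht', one_smul]
        rw [h13]
        exact Submodule.smul_mem _ _ ⟨_, rfl⟩
      have h14 : LocalizedModule.mk m t
          = Localization.mk 1 t • LocalizedModule.mk m (1 : 𝔪.primeCompl) := by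
        rw [LocalizedModule.mk_smul_mk, one_smul, mul_one]
      rw [h14]
      exact Submodule.smul_mem _ _ h11
  have hμker : ∀ c, μ c = 0 → c = 0 := by
    intro c hc
    obtain ⟨t, hb⟩ := IsLocalization.exist_integer_multiples 𝔪.primeCompl Finset.univ c
    choose y hy using fun i => hb i (Finset.mem_univ i)
    have h15 : μ (fun i => algebraMap A Aₘ (y i)) = 0 := by
      have h16 : (fun i => algebraMap A Aₘ (y i)) = fun i => algebraMap A Aₘ (t : A) * c i := by
        funext i
        rw [hy i, Algebra.smul_def]
      rw [h16]
      have h17 : (fun i => algebraMap A Aₘ (t : A) * c i)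
          = algebraMap A Aₘ (t : A) • c := rfl
      rw [h17, map_smul, hc, smul_zero]
    rw [hμφ] at h15
    have h18 : ∃ u : 𝔪.primeCompl, u • φ y = 0 := by
      have := LocalizedModule.mk_eq.mp (h15.trans (LocalizedModule.zero_mk (1 : 𝔪.primeCompl)).symm)
      obtain ⟨u, hu⟩ := this
      refine ⟨u, ?_⟩
      simpa using hu
    obtain ⟨u, hu⟩ := h18
    have h19 : φ ((u : A) • y) = 0 := by
      rw [map_smul]
      simpa [Submonoid.smul_def] using hu
    have h20 : ∀ i, algebraMap A Aₘ (y i) = 0 := by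
      intro i
      have h21 : (s * u) * y i = 0 := by
        have h21' := hker _ h19 i
        simp only [Pi.smul_apply, smul_eq_mul] at h21'
        linear_combination h21'
      have h22 : IsUnit (algebraMap A Aₘ (s * u)) :=
        IsLocalization.map_units Aₘ ((⟨s, hs𝔪⟩ : 𝔪.primeCompl) * u)
      have h23 : algebraMap A Aₘ (s * u) * algebraMap A Aₘ (y i) = 0 := by
        rw [← map_mul, h21, map_zero]
      exact (h22.mul_right_eq_zero).mp h23
    funext i
    have h24 : algebraMap A Aₘ (t : A) * c i = 0 := by
      rw [← Algebra.smul_def, ← hy i, h20 i]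
    have h25 : IsUnit (algebraMap A Aₘ (t : A)) := IsLocalization.map_units Aₘ t
    exact (h25.mul_right_eq_zero).mp h24
  have hμinj : Function.Injective μ := by
    intro c1 c2 hcc
    have := hμker (c1 - c2) (by rw [map_sub, hcc, sub_self])
    exact sub_eq_zero.mp this
  let e := LinearEquiv.ofBijective μ ⟨hμinj, hμsurj⟩
  refine ⟨Module.Free.of_equiv e, ?_⟩
  rw [← e.finrank_eq, Module.finrank_fin_fun]

set_option maxHeartbeats 1000000 in
lemma statement3.forward (k : Type*) [Field k] [IsAlgClosed k]
    (A : Type*) [CommRing A] [Algebra k A] [Algebra.FiniteType k A]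
    (N : Type*) [AddCommGroup N] [Module A N] [Module.Finite A N] (r : ℕ) :
    FiniteLocallyFreeOfRank A N r →
      ∀ (𝔪 : Ideal A) (_ : 𝔪.IsMaximal), Module.finrank k ((A ⧸ 𝔪) ⊗[A] N) = r := by
  rintro ⟨hfin, hproj, hrank⟩ 𝔪 h𝔪
  haveI := h𝔪
  haveI : IsNoetherianRing A := Algebra.FiniteType.isNoetherianRing k A
  haveI : IsNoetherianRing (Localization.AtPrime 𝔪) :=
    IsLocalization.isNoetherianRing 𝔪.primeCompl _ inferInstance
  haveI : Module.Finite (Localization.AtPrime 𝔪) (LocalizedModule 𝔪.primeCompl N) :=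
    Module.Finite.of_isLocalizedModule 𝔪.primeCompl (LocalizedModule.mkLinearMap 𝔪.primeCompl N)
  haveI : Module.FinitePresentation (Localization.AtPrime 𝔪) (LocalizedModule 𝔪.primeCompl N) :=
    Module.finitePresentation_of_finite _ _
  haveI := hproj
  haveI : Module.Flat A N := inferInstance
  haveI : Module.Flat (Localization.AtPrime 𝔪) (LocalizedModule 𝔪.primeCompl N) :=
    Module.Flat.of_isLocalizedModule (Rp := Localization.AtPrime 𝔪) 𝔪.primeCompl
      (LocalizedModule.mkLinearMap 𝔪.primeCompl N)
  haveI : Module.Free (Localization.AtPrime 𝔪) (LocalizedModule 𝔪.primeCompl N) :=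
    Module.free_of_flat_of_isLocalRing
  rw [statement3.aux_dimshift 𝔪 ((A ⧸ 𝔪) ⊗[A] N), statement3.fiber_finrank 𝔪,
    hrank 𝔪 h𝔪.isPrime]

/-- Let `k` be algebraically closed, `A` a finitely generated
commutative `k`-algebra, `N` a finitely generated `A`-module and `r : ℕ`.  If `N`
is finite locally free of rank `r`, then `dim_k (N ⊗_A A/𝔪) = r` for every
maximal ideal `𝔪 ⊆ A`; and if moreover `A` is reduced, the converse holds. -/
theorem statement3 (k : Type*) [Field k] [IsAlgClosed k]
    (A : Type*) [CommRing A] [Algebra k A] [Algebra.FiniteType k A]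
    (N : Type*) [AddCommGroup N] [Module A N] [Module.Finite A N] (r : ℕ) :
    (FiniteLocallyFreeOfRank A N r →
      ∀ (𝔪 : Ideal A) (_ : 𝔪.IsMaximal), Module.finrank k ((A ⧸ 𝔪) ⊗[A] N) = r) ∧
    (IsReduced A →
      (FiniteLocallyFreeOfRank A N r ↔
        ∀ (𝔪 : Ideal A) (_ : 𝔪.IsMaximal), Module.finrank k ((A ⧸ 𝔪) ⊗[A] N) = r)) := by
  constructor
  · exact statement3.forward k A N r
  · intro hred
    refine ⟨statement3.forward k A N r, ?_⟩
    intro h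
    haveI : IsNoetherianRing A := Algebra.FiniteType.isNoetherianRing k A
    haveI : IsJacobsonRing A := isJacobsonRing_of_finiteType (A := k)
    have h' : ∀ (𝔪 : Ideal A) (_ : 𝔪.IsMaximal),
        Module.finrank (A ⧸ 𝔪) ((A ⧸ 𝔪) ⊗[A] N) = r := by
      intro 𝔪 h𝔪
      haveI := h𝔪
      rw [← statement3.aux_dimshift (k := k) 𝔪 ((A ⧸ 𝔪) ⊗[A] N)]
      exact h 𝔪 h𝔪
    have hmaxfree := fun (𝔪 : Ideal A) (h𝔪 : 𝔪.IsMaximal) => statement3.stepA h' 𝔪 h𝔪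
    haveI : Module.FinitePresentation A N := Module.finitePresentation_of_finite _ _
    have hproj : Module.Projective A N := by
      apply Module.projective_of_localization_maximal
      intro I hI
      haveI := (hmaxfree I hI).1
      exact inferInstance
    refine ⟨inferInstance, hproj, ?_⟩
    intro P hP
    haveI := hP
    haveI := hproj
    haveI : Module.Flat A N := inferInstance
    obtain ⟨𝔪, h𝔪, hle⟩ := P.exists_le_maximal hP.ne_top
    let p : PrimeSpectrum A := ⟨P, hP⟩
    let q : PrimeSpectrum A := ⟨𝔪, h𝔪.isPrime⟩
    have hlc := Module.isLocallyConstant_rankAtStalk (R := A) (M := N)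
    have hU : IsOpen (Module.rankAtStalk (R := A) N ⁻¹'
        {Module.rankAtStalk (R := A) N q}) := hlc _
    have hq : q ∈ closure ({p} : Set (PrimeSpectrum A)) :=
      (PrimeSpectrum.le_iff_mem_closure p q).mp hle
    have hpmem : p ∈ Module.rankAtStalk (R := A) N ⁻¹'
        {Module.rankAtStalk (R := A) N q} := by
      obtain ⟨z, hz1, hz2⟩ := (mem_closure_iff.mp hq) _ hU rfl
      rwa [Set.mem_singleton_iff.mp hz2] at hz1
    have h26 : Module.rankAtStalk (R := A) N p = Module.rankAtStalk (R := A) N q := hpmem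
    have h27 : Module.rankAtStalk (R := A) N q = r := (hmaxfree 𝔪 h𝔪).2
    exact h26.trans h27
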